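/- Fix p < -1 and r > 1. Then the function α ↦ Θ_p{α, r} is monotone increasing on (0, 1): for all 0 < α₁ ≤ α₂ < 1, one has Θ_p{α₁, r} ≤ Θ_p{α₂, r}. -/

import Mathlib

open Real Filter

/-- `F_p(s, α, r) = ((1 - s^{2p})/(1 - r^{2p}))(r² + α²)
  + ((s^{2p} - r^{2p})/(1 - r^{2p}))(1 + α² r²) - s² - α² r² s⁻²`. -/
noncomputable def Fp (p α r s : ℝ) : ℝ :=
  (1 - s ^ (2 * p)) / (1 - r ^ (2 * p)) * (r ^ 2 + α ^ 2) +
  (s ^ (2 * p) - r ^ (2 * p)) / (1 - r ^ (2 * p)) * (1 + α ^ 2 * r ^ 2) -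
  s ^ 2 - α ^ 2 * r ^ 2 * s ^ (-2 : ℝ)

/-- The period function `Θ_p{α, r} = ∫_1^r ds / √(F_p(s, α, r))`. -/
noncomputable def Theta (p α r : ℝ) : ℝ :=
  ∫ s in (1 : ℝ)..r, (Real.sqrt (Fp p α r s))⁻¹

open Set MeasureTheory IntervalIntegrable in
section
end

open Set MeasureTheory

lemma convexOn_rpow_nonpos {q : ℝ} (hq : q ≤ 0) :
    ConvexOn ℝ (Set.Ioi (0:ℝ)) fun x : ℝ => x ^ q := by
  have hdiff : ∀ x ∈ Set.Ioi (0:ℝ), HasDerivAt (fun x : ℝ => x ^ q) (q * x ^ (q - 1)) x :=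
    fun x hx => Real.hasDerivAt_rpow_const (Or.inl (ne_of_gt hx))
  have hderiv : Set.EqOn (deriv fun x : ℝ => x ^ q) (fun x => q * x ^ (q - 1)) (Set.Ioi 0) :=
    fun x hx => (hdiff x hx).deriv
  apply convexOn_of_deriv2_nonneg (convex_Ioi 0)
  · exact fun x hx => ((hdiff x hx).differentiableAt.continuousAt).continuousWithinAt
  · rw [interior_Ioi]
    exact fun x hx => (hdiff x hx).differentiableAt.differentiableWithinAt
  · rw [interior_Ioi]
    intro x hx
    have : DifferentiableAt ℝ (fun x : ℝ => q * x ^ (q - 1)) x :=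
      (Real.hasDerivAt_rpow_const (p := q - 1) (Or.inl (ne_of_gt hx))).differentiableAt.const_mul q
    exact this.congr_of_eventuallyEq
      (Filter.eventuallyEq_of_mem (isOpen_Ioi.mem_nhds hx) hderiv) |>.differentiableWithinAt
  · rw [interior_Ioi]
    intro x hx
    have e1 : deriv (deriv fun x : ℝ => x ^ q) x = deriv (fun x : ℝ => q * x ^ (q - 1)) x := by
      apply Filter.EventuallyEq.deriv_eq
      exact Filter.eventuallyEq_of_mem (isOpen_Ioi.mem_nhds hx) hderiv
    have e2 : deriv (fun x : ℝ => q * x ^ (q - 1)) x = q * ((q - 1) * x ^ (q - 1 - 1)) := by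
      rw [deriv_const_mul _ ((Real.hasDerivAt_rpow_const (p := q - 1)
        (Or.inl (ne_of_gt hx))).differentiableAt)]
      rw [(Real.hasDerivAt_rpow_const (p := q - 1) (Or.inl (ne_of_gt hx))).deriv]
    show 0 ≤ deriv^[2] (fun x : ℝ => x ^ q) x
    rw [Function.iterate_succ, Function.iterate_one, Function.comp_apply] at *
    rw [e1, e2]
    have hxpos : (0:ℝ) < x ^ (q - 1 - 1) := Real.rpow_pos_of_pos hx _
    have hqq : 0 ≤ q * (q - 1) := by nlinarith
    nlinarith [mul_nonneg hqq hxpos.le]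

lemma Fp_eq (p α r : ℝ) (hD : 1 - r ^ (2*p) ≠ 0) : Fp p α r = fun s =>
    ((r^2 + α^2) - r^(2*p) * (1 + α^2*r^2)) / (1 - r^(2*p))
      + ((1-α^2)*(1-r^2)/(1 - r^(2*p))) * s^(2*p) - s^2 - α^2*r^2 * s^(-2:ℝ) := by
  funext s
  unfold Fp
  field_simp
  ring

lemma Fp_one (p α r : ℝ) (hD : 1 - r ^ (2*p) ≠ 0) : Fp p α r 1 = 0 := by
  unfold Fp
  rw [Real.one_rpow]
  field_simp
  simp only [Real.one_rpow]
  ring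

lemma Fp_r (p α r : ℝ) (hr : 0 < r) (hD : 1 - r ^ (2*p) ≠ 0) : Fp p α r r = 0 := by
  unfold Fp
  have h2 : r ^ (-2:ℝ) = (r^2)⁻¹ := by
    rw [Real.rpow_neg hr.le, show ((2:ℝ) = ((2:ℕ):ℝ)) by norm_num, Real.rpow_natCast]
  rw [h2]
  have hr2 : (r:ℝ)^2 ≠ 0 := by positivity
  field_simp
  ring

lemma Fp_strictConcave (p α r : ℝ) (hp : p < -1) (hr : 1 < r) (hα : α < 1) (hα0 : 0 ≤ α) :
    StrictConcaveOn ℝ (Set.Icc 1 r) (Fp p α r) := by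
  have hq : 2*p ≤ 0 := by linarith
  have hR : r ^ (2*p) < 1 := Real.rpow_lt_one_of_one_lt_of_neg hr (by linarith)
  have hD : (0:ℝ) < 1 - r ^ (2*p) := by linarith
  have hsub : Set.Icc (1:ℝ) r ⊆ Set.Ioi 0 := fun x hx => lt_of_lt_of_le one_pos hx.1
  set K : ℝ := ((r^2 + α^2) - r^(2*p) * (1 + α^2*r^2)) / (1 - r^(2*p)) with hK
  set c : ℝ := (1-α^2)*(1-r^2)/(1 - r^(2*p)) with hc
  have hcneg : c ≤ 0 := by
    apply div_nonpos_of_nonpos_of_nonneg _ hD.le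
    apply mul_nonpos_of_nonneg_of_nonpos
    · nlinarith
    · nlinarith
  -- convex part : (-c) * s^(2p) + α²r² * s^(-2) + (-K)
  have conv1 : ConvexOn ℝ (Set.Icc (1:ℝ) r) fun s : ℝ => (-c) * s ^ (2*p) := by
    have := (convexOn_rpow_nonpos hq).smul (c := -c) (by linarith)
    have h2 := this.subset hsub (convex_Icc _ _)
    simpa only [smul_eq_mul] using h2
  have conv2 : ConvexOn ℝ (Set.Icc (1:ℝ) r) fun s : ℝ => α^2*r^2 * s ^ (-2:ℝ) := by
    have := (convexOn_rpow_nonpos (by norm_num : (-2:ℝ) ≤ 0)).smul (c := α^2*r^2) (by positivity)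
    have h2 := this.subset hsub (convex_Icc _ _)
    simpa only [smul_eq_mul] using h2
  have conv3 : ConvexOn ℝ (Set.Icc (1:ℝ) r) fun _ : ℝ => -K := convexOn_const _ (convex_Icc _ _)
  have strict : StrictConvexOn ℝ (Set.Icc (1:ℝ) r) fun s : ℝ => s ^ 2 :=
    (Even.strictConvexOn_pow even_two two_ne_zero).subset (Set.subset_univ _) (convex_Icc _ _)
  have S : StrictConvexOn ℝ (Set.Icc (1:ℝ) r)
      fun s : ℝ => ((-c) * s ^ (2*p) + α^2*r^2 * s ^ (-2:ℝ) + -K) + s ^ 2 :=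
    ((conv1.add conv2).add conv3).add_strictConvexOn strict
  have N := S.neg
  have heq : Fp p α r = fun s : ℝ =>
      -((((-c) * s ^ (2*p) + α^2*r^2 * s ^ (-2:ℝ) + -K)) + s ^ 2) := by
    rw [Fp_eq p α r (ne_of_gt hD)]
    funext s
    rw [hK, hc]
    ring
  rw [heq]
  exact N

lemma concave_lb {f : ℝ → ℝ} {x y : ℝ} (hxy : x < y) (h : ConcaveOn ℝ (Set.Icc x y) f)
    (hfx : f x = 0) : ∀ s ∈ Set.Icc x y, (s - x)/(y - x) * f y ≤ f s := by
  intro s hs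
  have hyx : (0:ℝ) < y - x := by linarith
  have ha : 0 ≤ (y - s)/(y - x) := by
    apply div_nonneg _ hyx.le; linarith [hs.2]
  have hb : 0 ≤ (s - x)/(y - x) := by
    apply div_nonneg _ hyx.le; linarith [hs.1]
  have hab : (y - s)/(y - x) + (s - x)/(y - x) = 1 := by field_simp; ring
  have := h.2 (Set.left_mem_Icc.2 hxy.le) (Set.right_mem_Icc.2 hxy.le) ha hb hab
  rw [smul_eq_mul, smul_eq_mul, smul_eq_mul, smul_eq_mul] at this
  have hxy' : (y - s)/(y - x) * x + (s - x)/(y - x) * y = s := by field_simp; ring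
  rw [hxy', hfx, mul_zero, zero_add] at this
  exact this

lemma concave_lb' {f : ℝ → ℝ} {x y : ℝ} (hxy : x < y) (h : ConcaveOn ℝ (Set.Icc x y) f)
    (hfy : f y = 0) : ∀ s ∈ Set.Icc x y, (y - s)/(y - x) * f x ≤ f s := by
  intro s hs
  have hyx : (0:ℝ) < y - x := by linarith
  have ha : 0 ≤ (y - s)/(y - x) := by
    apply div_nonneg _ hyx.le; linarith [hs.2]
  have hb : 0 ≤ (s - x)/(y - x) := by
    apply div_nonneg _ hyx.le; linarith [hs.1]
  have hab : (y - s)/(y - x) + (s - x)/(y - x) = 1 := by field_simp; ring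
  have := h.2 (Set.left_mem_Icc.2 hxy.le) (Set.right_mem_Icc.2 hxy.le) ha hb hab
  rw [smul_eq_mul, smul_eq_mul, smul_eq_mul, smul_eq_mul] at this
  have hxy' : (y - s)/(y - x) * x + (s - x)/(y - x) * y = s := by field_simp; ring
  rw [hxy', hfy, mul_zero, add_zero] at this
  exact this

section
variable (p α r : ℝ)

lemma hD_pos (hp : p < -1) (hr : 1 < r) : (0:ℝ) < 1 - r ^ (2*p) := by
  have : r ^ (2*p) < 1 := Real.rpow_lt_one_of_one_lt_of_neg hr (by linarith)
  linarith

lemma Fp_mid_pos (hp : p < -1) (hr : 1 < r) (hα : α < 1) (hα0 : 0 ≤ α) :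
    0 < Fp p α r ((1+r)/2) := by
  have hD := hD_pos p r hp hr
  have h := (Fp_strictConcave p α r hp hr hα hα0).2
    (Set.left_mem_Icc.2 hr.le) (Set.right_mem_Icc.2 hr.le) (ne_of_lt hr)
    (show (0:ℝ) < 1/2 by norm_num) (show (0:ℝ) < 1/2 by norm_num)
    (show (1:ℝ)/2 + 1/2 = 1 by norm_num)
  rw [Fp_one p α r (ne_of_gt hD), Fp_r p α r (by linarith) (ne_of_gt hD)] at h
  simp only [smul_eq_mul] at h
  have : (1:ℝ)/2 * 1 + 1/2 * r = (1+r)/2 := by ring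
  rw [this] at h
  linarith

lemma Fp_lb_left (hp : p < -1) (hr : 1 < r) (hα : α < 1) (hα0 : 0 ≤ α) :
    ∀ s ∈ Set.Icc (1:ℝ) ((1+r)/2),
      (s - 1)/((1+r)/2 - 1) * Fp p α r ((1+r)/2) ≤ Fp p α r s := by
  have hD := hD_pos p r hp hr
  have hm : (1:ℝ) < (1+r)/2 := by linarith
  have hsub : Set.Icc (1:ℝ) ((1+r)/2) ⊆ Set.Icc (1:ℝ) r := by
    apply Set.Icc_subset_Icc le_rfl; linarith
  have hconc := ((Fp_strictConcave p α r hp hr hα hα0).concaveOn).subset hsub (convex_Icc _ _)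
  exact concave_lb hm hconc (Fp_one p α r (ne_of_gt hD))

lemma Fp_lb_right (hp : p < -1) (hr : 1 < r) (hα : α < 1) (hα0 : 0 ≤ α) :
    ∀ s ∈ Set.Icc ((1+r)/2) r,
      (r - s)/(r - (1+r)/2) * Fp p α r ((1+r)/2) ≤ Fp p α r s := by
  have hD := hD_pos p r hp hr
  have hm : (1+r)/2 < r := by linarith
  have hsub : Set.Icc ((1+r)/2) r ⊆ Set.Icc (1:ℝ) r := by
    apply Set.Icc_subset_Icc _ le_rfl; linarith
  have hconc := ((Fp_strictConcave p α r hp hr hα hα0).concaveOn).subset hsub (convex_Icc _ _)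
  exact concave_lb' hm hconc (Fp_r p α r (by linarith) (ne_of_gt hD))

lemma Fp_pos (hp : p < -1) (hr : 1 < r) (hα : α < 1) (hα0 : 0 ≤ α) :
    ∀ s ∈ Set.Ioo (1:ℝ) r, 0 < Fp p α r s := by
  intro s hs
  have hmid := Fp_mid_pos p α r hp hr hα hα0
  rcases le_or_gt s ((1+r)/2) with h | h
  · have := Fp_lb_left p α r hp hr hα hα0 s ⟨hs.1.le, h⟩
    have h1 : 0 < (s - 1)/((1+r)/2 - 1) := by
      apply div_pos <;> linarith [hs.1]
    nlinarith
  · have := Fp_lb_right p α r hp hr hα hα0 s ⟨h.le, hs.2.le⟩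
    have h1 : 0 < (r - s)/(r - (1+r)/2) := by
      apply div_pos <;> linarith [hs.2]
    nlinarith

end

noncomputable def Haux (p r s : ℝ) : ℝ :=
  (1 - r^(2*p+2))/(1 - r^(2*p)) * s^2 + (r^2-1)/(1 - r^(2*p)) * s^(2*p+2) - r^2

lemma Haux_nonpos (p r : ℝ) (hp : p < -1) (hr : 1 < r) :
    ∀ s ∈ Set.Icc (1:ℝ) r, Haux p r s ≤ 0 := by
  have hD := hD_pos p r hp hr
  have hr0 : (0:ℝ) < r := by linarith
  have hq2 : (2*p+2 : ℝ) ≤ 0 := by linarith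
  have hR2 : r ^ (2*p+2) < 1 := Real.rpow_lt_one_of_one_lt_of_neg hr (by linarith)
  have hsub : Set.Icc (1:ℝ) r ⊆ Set.Ioi 0 := fun x hx => lt_of_lt_of_le one_pos hx.1
  have hc0 : 0 ≤ (1 - r^(2*p+2))/(1 - r^(2*p)) := div_nonneg (by linarith) hD.le
  have hc3 : 0 ≤ (r^2-1)/(1 - r^(2*p)) := div_nonneg (by nlinarith) hD.le
  -- convexity of Haux
  have conv1 : ConvexOn ℝ (Set.Icc (1:ℝ) r) fun s : ℝ =>
      (1 - r^(2*p+2))/(1 - r^(2*p)) * s^2 := by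
    have := ((Even.strictConvexOn_pow even_two two_ne_zero).convexOn.subset
      (Set.subset_univ (Set.Icc (1:ℝ) r)) (convex_Icc _ _)).smul hc0
    simpa only [smul_eq_mul] using this
  have conv2 : ConvexOn ℝ (Set.Icc (1:ℝ) r) fun s : ℝ =>
      (r^2-1)/(1 - r^(2*p)) * s^(2*p+2) := by
    have := ((convexOn_rpow_nonpos hq2).subset hsub (convex_Icc _ _)).smul hc3
    simpa only [smul_eq_mul] using this
  have conv : ConvexOn ℝ (Set.Icc (1:ℝ) r) (Haux p r) := by
    have := (conv1.add conv2).add (convexOn_const (-r^2) (convex_Icc _ _))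
    have heq : Haux p r = fun s => ((1 - r^(2*p+2))/(1 - r^(2*p)) * s^2 +
        (r^2-1)/(1 - r^(2*p)) * s^(2*p+2)) + -r^2 := by
      funext s; unfold Haux; ring
    rw [heq]; exact this
  -- endpoint values
  have hsplit : r ^ (2*p+2) = r^(2*p) * r^2 := by
    rw [Real.rpow_add hr0, show ((2:ℝ) = ((2:ℕ):ℝ)) by norm_num, Real.rpow_natCast]
  have H1 : Haux p r 1 = 0 := by
    unfold Haux
    rw [Real.one_rpow, hsplit]
    field_simp
    ring
  have Hr : Haux p r r = 0 := by
    unfold Haux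
    rw [hsplit]
    have : r ^ (2*p+2) = r^(2*p) * r^2 := hsplit
    field_simp
    ring
  intro s hs
  have hseg : s ∈ segment ℝ (1:ℝ) r := by rwa [segment_eq_Icc hr.le]
  have := conv.le_on_segment (Set.left_mem_Icc.2 hr.le) (Set.right_mem_Icc.2 hr.le) hseg
  rw [H1, Hr] at this
  simpa using this

lemma Fp_diff (p r s α₁ α₂ : ℝ) (hp : p < -1) (hr : 1 < r) (hs : 0 < s) :
    Fp p α₂ r s - Fp p α₁ r s = (α₂^2 - α₁^2) * (Haux p r s / s^2) := by
  have hD := hD_pos p r hp hr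
  have hr0 : (0:ℝ) < r := by linarith
  have hs2 : s ^ (-2:ℝ) = (s^2)⁻¹ := by
    rw [Real.rpow_neg hs.le, show ((2:ℝ) = ((2:ℕ):ℝ)) by norm_num, Real.rpow_natCast]
  have hsplit : s ^ (2*p+2) = s^(2*p) * s^2 := by
    rw [Real.rpow_add hs, show ((2:ℝ) = ((2:ℕ):ℝ)) by norm_num, Real.rpow_natCast]
  have hsplitr : r ^ (2*p+2) = r^(2*p) * r^2 := by
    rw [Real.rpow_add hr0, show ((2:ℝ) = ((2:ℕ):ℝ)) by norm_num, Real.rpow_natCast]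
  unfold Fp Haux
  rw [hs2, hsplit, hsplitr]
  have h1 : (1:ℝ) - r ^ (2*p) ≠ 0 := ne_of_gt hD
  have h2 : (s:ℝ)^2 ≠ 0 := by positivity
  field_simp
  ring

lemma Fp_mono (p r s α₁ α₂ : ℝ) (hp : p < -1) (hr : 1 < r) (h12 : α₁ ≤ α₂) (h0 : 0 ≤ α₁)
    (hs : s ∈ Set.Icc (1:ℝ) r) : Fp p α₂ r s ≤ Fp p α₁ r s := by
  have hs0 : (0:ℝ) < s := lt_of_lt_of_le one_pos hs.1
  have hH := Haux_nonpos p r hp hr s hs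
  have hd := Fp_diff p r s α₁ α₂ hp hr hs0
  have h1 : 0 ≤ α₂^2 - α₁^2 := by nlinarith
  have h2 : Haux p r s / s^2 ≤ 0 := div_nonpos_of_nonpos_of_nonneg hH (by positivity)
  nlinarith

lemma Fp_continuousAt (p α r s : ℝ) (hs : 0 < s) : ContinuousAt (Fp p α r) s := by
  have h1 : ContinuousAt (fun s : ℝ => s ^ (2*p)) s :=
    Real.continuousAt_rpow_const s _ (Or.inl hs.ne')
  have h2 : ContinuousAt (fun s : ℝ => s ^ (-2:ℝ)) s :=
    Real.continuousAt_rpow_const s _ (Or.inl hs.ne')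
  unfold Fp
  exact ((((continuousAt_const.sub h1).div_const _).mul continuousAt_const).add
    (((h1.sub continuousAt_const).div_const _).mul continuousAt_const)).sub
    ((continuous_pow 2).continuousAt) |>.sub (continuousAt_const.mul h2)

lemma sqrt_inv_eq (x : ℝ) (hx : 0 ≤ x) : (Real.sqrt x)⁻¹ = x ^ (-(1/2) : ℝ) := by
  rw [Real.sqrt_eq_rpow, ← Real.rpow_neg hx]

lemma integrable_left (p α r : ℝ) (hp : p < -1) (hr : 1 < r) (hα : α < 1) (hα0 : 0 ≤ α) :
    IntervalIntegrable (fun s => (Real.sqrt (Fp p α r s))⁻¹) volume 1 ((1+r)/2) := by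
  set m := (1+r)/2 with hm
  have hm1 : (1:ℝ) < m := by rw [hm]; linarith
  have hmr : m < r := by rw [hm]; linarith
  set c := Fp p α r m / (m - 1) with hc
  have hc0 : 0 < c := div_pos (Fp_mid_pos p α r hp hr hα hα0) (by linarith)
  -- dominating function
  set g : ℝ → ℝ := fun s => (Real.sqrt c)⁻¹ * (s - 1) ^ (-(1/2) : ℝ) with hg
  have hgint : IntervalIntegrable g volume 1 m := by
    have h0 : IntervalIntegrable (fun x : ℝ => x ^ (-(1/2):ℝ)) volume 0 (m-1) :=
      intervalIntegral.intervalIntegrable_rpow' (by norm_num)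
    have h1 := (h0.comp_sub_right 1).const_mul (Real.sqrt c)⁻¹
    have e1 : (0:ℝ) + 1 = 1 := by norm_num
    have e2 : m - 1 + 1 = m := by ring
    rw [e1, e2] at h1
    exact h1
  apply hgint.mono_fun'
  · -- measurability
    rw [Set.uIoc_of_le hm1.le]
    apply ContinuousOn.aestronglyMeasurable _ measurableSet_Ioc
    intro s hs
    have hs0 : (0:ℝ) < s := by linarith [hs.1]
    have hFpos : 0 < Fp p α r s := by
      have := Fp_lb_left p α r hp hr hα hα0 s ⟨hs.1.le, hs.2⟩
      have h1 : 0 < (s - 1)/(m - 1) := div_pos (by linarith [hs.1]) (by linarith)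
      nlinarith [Fp_mid_pos p α r hp hr hα hα0]
    have hca : ContinuousAt (fun s => (Real.sqrt (Fp p α r s))⁻¹) s :=
      (Real.continuous_sqrt.continuousAt.comp (Fp_continuousAt p α r s hs0)).inv₀
        (ne_of_gt (Real.sqrt_pos.2 hFpos))
    exact hca.continuousWithinAt
  · -- bound
    rw [Set.uIoc_of_le hm1.le]
    filter_upwards [ae_restrict_mem measurableSet_Ioc] with s hs
    have hs1 : (1:ℝ) < s := hs.1
    have hbd : c * (s - 1) ≤ Fp p α r s := by
      have := Fp_lb_left p α r hp hr hα hα0 s ⟨hs1.le, hs.2⟩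
      rw [hc]
      calc Fp p α r m / (m - 1) * (s - 1) = (s - 1)/(m - 1) * Fp p α r m := by ring
      _ ≤ Fp p α r s := this
    have hpos : 0 < c * (s - 1) := by nlinarith
    have hsq : 0 < Real.sqrt (c * (s - 1)) := Real.sqrt_pos.2 hpos
    have h1 : (Real.sqrt (Fp p α r s))⁻¹ ≤ (Real.sqrt (c * (s - 1)))⁻¹ := by
      apply inv_anti₀ hsq (Real.sqrt_le_sqrt hbd)
    have h2 : (Real.sqrt (c * (s - 1)))⁻¹ = g s := by
      rw [hg, Real.sqrt_mul hc0.le, mul_inv, sqrt_inv_eq (s-1) (by linarith)]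
    rw [Real.norm_eq_abs, abs_of_nonneg (by positivity)]
    rw [← h2]
    exact h1

lemma integrable_right (p α r : ℝ) (hp : p < -1) (hr : 1 < r) (hα : α < 1) (hα0 : 0 ≤ α) :
    IntervalIntegrable (fun s => (Real.sqrt (Fp p α r s))⁻¹) volume ((1+r)/2) r := by
  set m := (1+r)/2 with hm
  have hm1 : (1:ℝ) < m := by rw [hm]; linarith
  have hmr : m < r := by rw [hm]; linarith
  set c := Fp p α r m / (r - m) with hc
  have hc0 : 0 < c := div_pos (Fp_mid_pos p α r hp hr hα hα0) (by linarith)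
  set g : ℝ → ℝ := fun s => (Real.sqrt c)⁻¹ * (r - s) ^ (-(1/2) : ℝ) with hg
  have hgint : IntervalIntegrable g volume m r := by
    have h0 : IntervalIntegrable (fun x : ℝ => x ^ (-(1/2):ℝ)) volume 0 (r-m) :=
      intervalIntegral.intervalIntegrable_rpow' (by norm_num)
    have h1 := ((h0.comp_sub_left r).symm).const_mul (Real.sqrt c)⁻¹
    have e1 : r - 0 = r := by ring
    have e2 : r - (r - m) = m := by ring
    rw [e1, e2] at h1
    exact h1
  apply hgint.mono_fun'
  · rw [Set.uIoc_of_le hmr.le]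
    have : Set.Ioo m r =ᵐ[volume] Set.Ioc m r := Ioo_ae_eq_Ioc
    rw [← Measure.restrict_congr_set this]
    apply ContinuousOn.aestronglyMeasurable _ measurableSet_Ioo
    intro s hs
    have hs0 : (0:ℝ) < s := by linarith [hs.1]
    have hFpos : 0 < Fp p α r s := by
      have := Fp_lb_right p α r hp hr hα hα0 s ⟨hs.1.le, hs.2.le⟩
      have h1 : 0 < (r - s)/(r - m) := div_pos (by linarith [hs.2]) (by linarith)
      nlinarith [Fp_mid_pos p α r hp hr hα hα0]
    have hca : ContinuousAt (fun s => (Real.sqrt (Fp p α r s))⁻¹) s :=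
      (Real.continuous_sqrt.continuousAt.comp (Fp_continuousAt p α r s hs0)).inv₀
        (ne_of_gt (Real.sqrt_pos.2 hFpos))
    exact hca.continuousWithinAt
  · rw [Set.uIoc_of_le hmr.le]
    filter_upwards [ae_restrict_mem measurableSet_Ioc] with s hs
    rcases eq_or_lt_of_le hs.2 with hsr | hsr
    · -- s = r : both sides are 0
      have hFr : c * (r - s) = 0 := by rw [hsr]; ring
      have hb : Fp p α r s = Fp p α r r := by rw [hsr]
      have hgs : g s = 0 := by
        rw [hg]
        simp only
        rw [hsr]
        rw [sub_self, Real.zero_rpow (by norm_num), mul_zero]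
      rw [hgs, Real.norm_eq_abs, abs_of_nonneg (by positivity), hb,
        Fp_r p α r (by linarith) (ne_of_gt (hD_pos p r hp hr)), Real.sqrt_zero, inv_zero]
    · have hbd : c * (r - s) ≤ Fp p α r s := by
        have := Fp_lb_right p α r hp hr hα hα0 s ⟨hs.1.le, hsr.le⟩
        rw [hc]
        calc Fp p α r m / (r - m) * (r - s) = (r - s)/(r - m) * Fp p α r m := by ring
        _ ≤ Fp p α r s := this
      have hpos : 0 < c * (r - s) := by nlinarith
      have hsq : 0 < Real.sqrt (c * (r - s)) := Real.sqrt_pos.2 hpos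
      have h1 : (Real.sqrt (Fp p α r s))⁻¹ ≤ (Real.sqrt (c * (r - s)))⁻¹ :=
        inv_anti₀ hsq (Real.sqrt_le_sqrt hbd)
      have h2 : (Real.sqrt (c * (r - s)))⁻¹ = g s := by
        rw [hg, Real.sqrt_mul hc0.le, mul_inv, sqrt_inv_eq (r-s) (by linarith)]
      rw [Real.norm_eq_abs, abs_of_nonneg (by positivity)]
      rw [← h2]
      exact h1

theorem stmt_16 (p r : ℝ) (hp : p < -1) (hr : 1 < r)
    (α₁ α₂ : ℝ) (hα₁ : 0 < α₁) (h₁₂ : α₁ ≤ α₂) (hα₂ : α₂ < 1) :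
    Theta p α₁ r ≤ Theta p α₂ r := by
  have hα₂0 : (0:ℝ) ≤ α₂ := le_trans hα₁.le h₁₂
  have hα₁1 : α₁ < 1 := lt_of_le_of_lt h₁₂ hα₂
  have hD := hD_pos p r hp hr
  have hint : ∀ α, 0 ≤ α → α < 1 →
      IntervalIntegrable (fun s => (Real.sqrt (Fp p α r s))⁻¹) MeasureTheory.volume 1 r :=
    fun α h0 h1 =>
      (integrable_left p α r hp hr h1 h0).trans (integrable_right p α r hp hr h1 h0)
  unfold Theta
  apply intervalIntegral.integral_mono_on hr.le (hint α₁ hα₁.le hα₁1) (hint α₂ hα₂0 hα₂)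
  intro s hs
  rcases eq_or_lt_of_le hs.1 with h1 | h1
  · rw [← h1, Fp_one p α₁ r (ne_of_gt hD), Fp_one p α₂ r (ne_of_gt hD)]
  rcases eq_or_lt_of_le hs.2 with h2 | h2
  · rw [h2, Fp_r p α₁ r (by linarith) (ne_of_gt hD), Fp_r p α₂ r (by linarith) (ne_of_gt hD)]
  have hpos := Fp_pos p α₂ r hp hr hα₂ hα₂0 s ⟨h1, h2⟩
  have hle := Fp_mono p r s α₁ α₂ hp hr h₁₂ hα₁.le ⟨hs.1, hs.2⟩
  exact inv_anti₀ (Real.sqrt_pos.2 hpos) (Real.sqrt_le_sqrt hle)
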